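/- If (y₁, y₂) are rational functions on ℝ³ satisfying x₁³x₂·y₁ + (x₁³ − (1+x₃²)x₂³)·y₂ = x₁⁴ wherever defined, and y₁ extends to a continuous function on ℝ³, then the restriction of y₁ to the set S = {x₁ = (1+x₃²)^{1/3}x₂} satisfies y₁ = x₁/x₂ = (1+x₃²)^{1/3} on S ∖ {x₂ = 0}; in particular y₁(0,0,t) = (1+t²)^{1/3}, which is not a rational function of t, a contradiction — hence the equation has no continuous rational solution. -/

import Mathlib

open MvPolynomial

/-- Evaluation of a two-variable polynomial (outer variable `u`, inner variable `t`). -/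
noncomputable def ev (u t : ℝ) (A : Polynomial (Polynomial ℝ)) : ℝ :=
  Polynomial.eval u (A.map (Polynomial.evalRingHom t))

lemma ev_mul (u t : ℝ) (A B : Polynomial (Polynomial ℝ)) :
    ev u t (A * B) = ev u t A * ev u t B := by
  simp [ev]

lemma ev_add (u t : ℝ) (A B : Polynomial (Polynomial ℝ)) :
    ev u t (A + B) = ev u t A + ev u t B := by
  simp [ev]

lemma ev_zero (u t : ℝ) : ev u t 0 = 0 := by simp [ev]

lemma ev_X (u t : ℝ) : ev u t Polynomial.X = u := by simp [ev]

lemma ev_CC (u t : ℝ) (a : ℝ) : ev u t (Polynomial.C (Polynomial.C a)) = a := by simp [ev]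

lemma ev_CX (u t : ℝ) : ev u t (Polynomial.C Polynomial.X) = t := by simp [ev]

lemma ev_zero_left (t : ℝ) (A : Polynomial (Polynomial ℝ)) :
    ev 0 t A = Polynomial.eval t (A.coeff 0) := by
  rw [ev, ← Polynomial.coeff_zero_eq_eval_zero, Polynomial.coeff_map]
  rfl

lemma ev_continuous (t : ℝ) (A : Polynomial (Polynomial ℝ)) :
    Continuous fun u => ev u t A :=
  (A.map (Polynomial.evalRingHom t)).continuous

/-- Substitution `x₀ ↦ l·U, x₁ ↦ U, x₂ ↦ T`. -/
noncomputable def psi (l : ℝ) : MvPolynomial (Fin 3) ℝ →ₐ[ℝ] Polynomial (Polynomial ℝ) :=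
  aeval ![Polynomial.C (Polynomial.C l) * Polynomial.X, Polynomial.X,
    Polynomial.C Polynomial.X]

lemma ev_psi (l u t : ℝ) (q : MvPolynomial (Fin 3) ℝ) :
    ev u t (psi l q) = eval ![l * u, u, t] q := by
  induction q using MvPolynomial.induction_on with
  | C a => simp [psi, ev]
  | add p q hp hq => simp only [map_add, ev_add, hp, hq]
  | mul_X p i hp =>
      rw [map_mul, ev_mul, hp, map_mul, eval_X]
      congr 1
      fin_cases i <;> simp [psi, ev]

/-- The non-vanishing locus of a nonzero polynomial is dense. -/
theorem dense_nonzero {n : ℕ} {q : MvPolynomial (Fin n) ℝ} (hq : q ≠ 0) :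
    Dense {x : Fin n → ℝ | eval x q ≠ 0} := by
  rw [dense_iff_inter_open]
  intro U hU ⟨z₀, hz₀⟩
  by_contra h
  apply hq
  apply MvPolynomial.funext
  intro x
  rw [map_zero]
  have hzero : ∀ y ∈ U, eval y q = 0 := by
    intro y hy
    by_contra hne
    exact h ⟨y, hy, hne⟩
  have han : AnalyticOnNhd ℝ (fun x => eval x q) Set.univ :=
    AnalyticOnNhd.eval_mvPolynomial q
  have hev : (fun x => eval x q) =ᶠ[nhds z₀] 0 := by
    filter_upwards [hU.mem_nhds hz₀] with y hy using hzero y hy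
  have := han.eqOn_zero_of_preconnected_of_eventuallyEq_zero isPreconnected_univ
    (Set.mem_univ z₀) hev
  exact this (Set.mem_univ x)

/-- Globalize a rational representation of a continuous function. -/
theorem glob {n : ℕ} {q p : MvPolynomial (Fin n) ℝ} {y : (Fin n → ℝ) → ℝ}
    (hy : Continuous y) (hq : q ≠ 0)
    (h : ∀ x, eval x q ≠ 0 → y x = eval x p / eval x q) :
    ∀ x, y x * eval x q = eval x p := by
  have heq : (fun x => y x * eval x q) = fun x => eval x p := by
    apply Continuous.ext_on (dense_nonzero hq)
      (hy.mul (MvPolynomial.continuous_eval q)) (MvPolynomial.continuous_eval p)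
    intro x hx
    change y x * eval x q = eval x p
    rw [h x hx]
    exact div_mul_cancel₀ _ hx
  exact fun x => congrFun heq x

/-- Strip powers of the outer variable from a two-variable rational representation. -/
theorem strip (Y : ℝ → ℝ → ℝ) (hY : ∀ t, Continuous fun u => Y u t) :
    ∀ (N : ℕ) (Q P : Polynomial (Polynomial ℝ)), Q ≠ 0 → Q.natDegree ≤ N →
    (∀ u t, Y u t * ev u t Q = ev u t P) →
    ∃ Q' P' : Polynomial (Polynomial ℝ), Q'.coeff 0 ≠ 0 ∧
      ∀ u t, Y u t * ev u t Q' = ev u t P' := by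
  intro N
  induction N with
  | zero =>
      intro Q P hQ hdeg hid
      refine ⟨Q, P, ?_, hid⟩
      intro h0
      apply hQ
      have := Polynomial.eq_C_of_natDegree_eq_zero (Nat.le_zero.mp hdeg)
      rw [this, Polynomial.coeff_C_zero] at h0
      rw [this, h0, map_zero]
  | succ N ih =>
      intro Q P hQ hdeg hid
      by_cases h0 : Q.coeff 0 ≠ 0
      · exact ⟨Q, P, h0, hid⟩
      push_neg at h0
      obtain ⟨Q₂, hQ₂⟩ := Polynomial.X_dvd_iff.mpr h0
      have hQ₂ne : Q₂ ≠ 0 := by rintro rfl; simp at hQ₂; exact hQ (by simp [hQ₂])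
      have hP0 : P.coeff 0 = 0 := by
        apply Polynomial.funext
        intro t
        rw [← ev_zero_left, ← hid 0 t, hQ₂, ev_zero_left]
        simp [h0]
      obtain ⟨P₂, hP₂⟩ := Polynomial.X_dvd_iff.mpr hP0
      have hid₂ : ∀ u t, Y u t * ev u t Q₂ = ev u t P₂ := by
        intro u t
        have key : ∀ t : ℝ, (fun u => Y u t * ev u t Q₂) = fun u => ev u t P₂ := by
          intro t
          apply Continuous.ext_on (dense_compl_singleton (0 : ℝ))
            ((hY t).mul (ev_continuous t Q₂)) (ev_continuous t P₂)
          intro u hu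
          have hu0 : u ≠ 0 := hu
          have := hid u t
          rw [hQ₂, hP₂, ev_mul, ev_mul, ev_X] at this
          have h2 : u * (Y u t * ev u t Q₂) = u * ev u t P₂ := by ring_nf; ring_nf at this; linarith
          exact mul_left_cancel₀ hu0 h2
        exact congrFun (key t) u
      have hdeg₂ : Q₂.natDegree ≤ N := by
        have : Q.natDegree = Q₂.natDegree + 1 := by
          rw [hQ₂, Polynomial.natDegree_mul Polynomial.X_ne_zero hQ₂ne,
            Polynomial.natDegree_X]
          ring
        omega
      exact ih Q₂ P₂ hQ₂ne hdeg₂ hid₂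

theorem stmt10 : ¬ ∃ (p₁ q₁ p₂ q₂ : MvPolynomial (Fin 3) ℝ)
    (y₁ y₂ : (Fin 3 → ℝ) → ℝ),
    Continuous y₁ ∧ Continuous y₂ ∧ q₁ ≠ 0 ∧ q₂ ≠ 0 ∧
    (∀ x : Fin 3 → ℝ, eval x q₁ ≠ 0 → y₁ x = eval x p₁ / eval x q₁) ∧
    (∀ x : Fin 3 → ℝ, eval x q₂ ≠ 0 → y₂ x = eval x p₂ / eval x q₂) ∧
    ∀ x : Fin 3 → ℝ,
      (x 0) ^ 3 * x 1 * y₁ x + ((x 0) ^ 3 - (1 + (x 2) ^ 2) * (x 1) ^ 3) * y₂ x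
        = (x 0) ^ 4 := by
  rintro ⟨p₁, q₁, p₂, q₂, y₁, y₂, hc₁, hc₂, hq₁, hq₂, hy₁, hy₂, heq⟩
  -- Step 1: global identity y₁ · q₁ = p₁
  have hglob : ∀ x, y₁ x * eval x q₁ = eval x p₁ := glob hc₁ hq₁ hy₁
  -- Step 2: y₁ = (1+t²)^{1/3} on the surface, away from u = 0
  have hsurf : ∀ (t u : ℝ), u ≠ 0 →
      y₁ ![(1 + t ^ 2) ^ ((1 : ℝ) / 3) * u, u, t] = (1 + t ^ 2) ^ ((1 : ℝ) / 3) := by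
    intro t u hu
    set c : ℝ := (1 + t ^ 2) ^ ((1 : ℝ) / 3) with hc
    have hpos : (0 : ℝ) < 1 + t ^ 2 := by positivity
    have hc3 : c ^ (3 : ℕ) = 1 + t ^ 2 := by
      rw [hc, ← Real.rpow_natCast ((1 + t ^ 2) ^ ((1 : ℝ) / 3)) 3,
        ← Real.rpow_mul hpos.le]
      norm_num
    have h := heq ![c * u, u, t]
    simp only [Matrix.cons_val_zero, Matrix.cons_val_one, Matrix.head_cons,
      Matrix.cons_val_two, Matrix.tail_cons] at h
    have h1 : (c * u) ^ 3 = (1 + t ^ 2) * u ^ 3 := by rw [mul_pow, hc3]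
    have h2 : (c * u) ^ 4 = c * ((1 + t ^ 2) * u ^ 3) * u := by
      have : (c * u) ^ 4 = c * (c ^ 3 * u ^ 3) * u := by ring
      rw [this, hc3]
    rw [h1, h2] at h
    have hkey : (1 + t ^ 2) * u ^ 3 * u * y₁ ![c * u, u, t]
        = (1 + t ^ 2) * u ^ 3 * u * c := by linarith
    have hne : (1 + t ^ 2) * u ^ 3 * u ≠ 0 := by positivity
    exact mul_left_cancel₀ hne hkey
  -- Step 3: continuity to the axis
  have hline : ∀ t : ℝ, y₁ ![0, 0, t] = (1 + t ^ 2) ^ ((1 : ℝ) / 3) := by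
    intro t
    set c : ℝ := (1 + t ^ 2) ^ ((1 : ℝ) / 3) with hc
    have hcontpath : Continuous fun u : ℝ => (![c * u, u, t] : Fin 3 → ℝ) := by
      apply continuous_pi
      intro i
      fin_cases i <;> simp <;> fun_prop
    have hkey : (fun u : ℝ => y₁ ![c * u, u, t]) = fun _ => c := by
      apply Continuous.ext_on (dense_compl_singleton (0 : ℝ))
        (hc₁.comp hcontpath) continuous_const
      intro u hu
      exact hsurf t u hu
    have := congrFun hkey 0
    simpa using this
  -- Step 4: find a plane x₀ = l·x₁ on which q₁ does not vanish identically
  have hXne : (X 1 : MvPolynomial (Fin 3) ℝ) ≠ 0 := MvPolynomial.X_ne_zero 1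
  have hopen : IsOpen {x : Fin 3 → ℝ | eval x q₁ ≠ 0} :=
    isOpen_compl_singleton.preimage (MvPolynomial.continuous_eval q₁)
  have hne : {x : Fin 3 → ℝ | eval x q₁ ≠ 0}.Nonempty := by
    by_contra h
    apply hq₁
    apply MvPolynomial.funext
    intro x
    rw [map_zero]
    by_contra hx
    exact h ⟨x, hx⟩
  obtain ⟨x₀, hx₀q, hx₀⟩ := (dense_nonzero hXne).inter_open_nonempty _ hopen hne
  simp only [Set.mem_setOf_eq, eval_X] at hx₀
  set l : ℝ := x₀ 0 / x₀ 1 with hl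
  have hx₀eq : (![l * x₀ 1, x₀ 1, x₀ 2] : Fin 3 → ℝ) = x₀ := by
    funext i
    fin_cases i
    · simp [hl]
      field_simp
    · simp
    · simp
  have hQne : psi l q₁ ≠ 0 := by
    intro h
    have := ev_psi l (x₀ 1) (x₀ 2) q₁
    rw [h, ev_zero, hx₀eq] at this
    exact hx₀q this.symm
  -- Step 5: identity on the plane
  have hplane : ∀ u t, y₁ ![l * u, u, t] * ev u t (psi l q₁) = ev u t (psi l p₁) := by
    intro u t
    rw [ev_psi, ev_psi]
    exact hglob _
  -- Step 6: strip powers of u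
  have hYcont : ∀ t : ℝ, Continuous fun u => y₁ ![l * u, u, t] := by
    intro t
    apply hc₁.comp
    apply continuous_pi
    intro i
    fin_cases i <;> simp <;> fun_prop
  obtain ⟨Q', P', hQ'0, hid'⟩ := strip (fun u t => y₁ ![l * u, u, t]) hYcont
    (psi l q₁).natDegree (psi l q₁) (psi l p₁) hQne le_rfl hplane
  -- Step 7: restrict to the axis
  set Q₀ : Polynomial ℝ := Q'.coeff 0 with hQ₀
  set P₀ : Polynomial ℝ := P'.coeff 0 with hP₀
  have haxis : ∀ t : ℝ, (1 + t ^ 2) ^ ((1 : ℝ) / 3) * Polynomial.eval t Q₀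
      = Polynomial.eval t P₀ := by
    intro t
    have h := hid' 0 t
    rw [ev_zero_left, ev_zero_left] at h
    have hpath : (![l * 0, 0, t] : Fin 3 → ℝ) = ![0, 0, t] := by norm_num
    rw [hpath, hline t] at h
    exact h
  -- Step 8: cube to get a polynomial identity
  have hcube : (1 + Polynomial.X ^ 2 : Polynomial ℝ) * Q₀ ^ 3 = P₀ ^ 3 := by
    apply Polynomial.funext
    intro t
    have hpos : (0 : ℝ) < 1 + t ^ 2 := by positivity
    have hc3 : ((1 + t ^ 2) ^ ((1 : ℝ) / 3)) ^ (3 : ℕ) = 1 + t ^ 2 := by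
      rw [← Real.rpow_natCast ((1 + t ^ 2) ^ ((1 : ℝ) / 3)) 3, ← Real.rpow_mul hpos.le]
      norm_num
    have := haxis t
    have h3 : ((1 + t ^ 2) ^ ((1 : ℝ) / 3) * Polynomial.eval t Q₀) ^ 3
        = (Polynomial.eval t P₀) ^ 3 := by rw [this]
    rw [mul_pow, hc3] at h3
    simpa using h3
  -- Step 9: degree contradiction
  have h1X : (1 + Polynomial.X ^ 2 : Polynomial ℝ) ≠ 0 := by
    intro h
    have := congrArg (Polynomial.eval 0) h
    simp at this
  have hP₀ne : P₀ ≠ 0 := by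
    intro h
    rw [h, zero_pow (by norm_num : (3:ℕ) ≠ 0)] at hcube
    rcases mul_eq_zero.mp hcube with h' | h'
    · exact h1X h'
    · exact hQ'0 (pow_eq_zero_iff (by norm_num) |>.mp h')
  have hdegL : ((1 + Polynomial.X ^ 2 : Polynomial ℝ) * Q₀ ^ 3).natDegree
      = 2 + 3 * Q₀.natDegree := by
    rw [Polynomial.natDegree_mul h1X (pow_ne_zero 3 hQ'0), Polynomial.natDegree_pow]
    congr 1
    have : (1 + Polynomial.X ^ 2 : Polynomial ℝ)
        = Polynomial.X ^ 2 + Polynomial.C 1 := by rw [map_one]; ring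
    rw [this, Polynomial.natDegree_X_pow_add_C]
  have hdegR : (P₀ ^ 3).natDegree = 3 * P₀.natDegree := by
    rw [Polynomial.natDegree_pow]
  rw [hcube, hdegR] at hdegL
  omega
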